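/- Define recursively φₙ₊₁ + vₙ₊₁/2 = Gₙ, vₙ₊₁ ∈ sign(φₙ₊₁), Gₙ₊₁ = Gₙ − vₙ₊₁, starting from a real number G₀. Then for all n ≥ 1, |φₙ| ≤ max(|G₀| − (n − 1/2), 0) and |Gₙ| ≤ max(|G₀| − n, 1). In particular φₙ = 0 for all n > |G₀| + 1/2. -/
import Mathlib

open Real Set

/-- The multivalued sign function. -/
def msign (x : ℝ) : Set ℝ :=
  if 0 < x then {1} else if x < 0 then {-1} else Set.Icc (-1) 1

lemma msign_step (Gn φ' v' : ℝ) (h1 : φ' + v' / 2 = Gn) (h2 : v' ∈ msign φ') :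
    |φ'| ≤ max (|Gn| - 1/2) 0 ∧ |Gn - v'| ≤ max (|Gn| - 1) (1/2) := by
  unfold msign at h2
  split_ifs at h2 with hp hn
  · simp only [Set.mem_singleton_iff] at h2
    subst h2
    have hG : Gn > 1/2 := by linarith
    constructor
    · rw [abs_of_pos hp]
      refine le_max_of_le_left ?_
      rw [abs_of_pos (by linarith : (0:ℝ) < Gn)]
      linarith
    · rcases le_total Gn 1 with h | h
      · refine le_max_of_le_right ?_
        rw [abs_of_nonpos (by linarith)]
        linarith
      · refine le_max_of_le_left ?_
        rw [abs_of_nonneg (by linarith), abs_of_nonneg (by linarith)]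
  · simp only [Set.mem_singleton_iff] at h2
    subst h2
    have hG : Gn < -(1/2) := by linarith
    constructor
    · rw [abs_of_neg hn]
      refine le_max_of_le_left ?_
      rw [abs_of_neg (by linarith : Gn < 0)]
      linarith
    · rcases le_total (-1) Gn with h | h
      · refine le_max_of_le_right ?_
        rw [abs_of_nonneg (by linarith)]
        linarith
      · refine le_max_of_le_left ?_
        rw [abs_of_nonpos (by linarith), abs_of_neg (by linarith : Gn < 0)]
        linarith
  · have hφ : φ' = 0 := le_antisymm (not_lt.mp hp) (not_lt.mp hn)
    subst hφ
    obtain ⟨hl, hr⟩ := h2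
    have hv : v' = 2 * Gn := by linarith
    subst hv
    constructor
    · simp
    · refine le_max_of_le_right ?_
      rw [abs_le]
      constructor <;> linarith

/-- For the recursion `φₙ₊₁ + vₙ₊₁/2 = Gₙ`, `vₙ₊₁ ∈ sign(φₙ₊₁)`,
`Gₙ₊₁ = Gₙ − vₙ₊₁`, one has `|φₙ| ≤ max (|G₀| − (n − 1/2)) 0` and
`|Gₙ| ≤ max (|G₀| − n) 1` for `n ≥ 1`; in particular `φₙ = 0` for
`n > |G₀| + 1/2`. -/
theorem stmt_12 (G φ v : ℕ → ℝ)
    (hrec : ∀ n : ℕ, φ (n+1) + v (n+1) / 2 = G n ∧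
      v (n+1) ∈ msign (φ (n+1)) ∧ G (n+1) = G n - v (n+1)) :
    (∀ n : ℕ, 1 ≤ n →
      |φ n| ≤ max (|G 0| - ((n:ℝ) - 1/2)) 0 ∧
      |G n| ≤ max (|G 0| - (n:ℝ)) 1) ∧
    (∀ n : ℕ, |G 0| + 1/2 < (n:ℝ) → φ n = 0) := by
  have key : ∀ n : ℕ, 1 ≤ n →
      |φ n| ≤ max (|G 0| - ((n:ℝ) - 1/2)) 0 ∧
      |G n| ≤ max (|G 0| - (n:ℝ)) (1/2) := by
    intro n hn
    induction n with
    | zero => omega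
    | succ m ih =>
      obtain ⟨h1, h2, h3⟩ := hrec m
      have step := msign_step (G m) (φ (m+1)) (v (m+1)) h1 h2
      rw [← h3] at step
      rcases Nat.eq_zero_or_pos m with hm | hm
      · subst hm
        push_cast
        constructor
        · convert step.1 using 3; ring
        · convert step.2 using 3
      · obtain ⟨_, ihG⟩ := ih hm
        push_cast
        have hmax := le_max_iff.mp ihG
        constructor
        · refine le_trans step.1 (max_le ?_ (le_max_right _ _))
          rcases hmax with h | h
          · refine le_max_of_le_left ?_; linarith
          · refine le_max_of_le_right ?_; linarith
        · refine le_trans step.2 (max_le ?_ (le_max_right _ _))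
          rcases hmax with h | h
          · refine le_max_of_le_left ?_; linarith
          · refine le_max_of_le_right ?_; linarith
  constructor
  · intro n hn
    obtain ⟨hφ, hG⟩ := key n hn
    exact ⟨hφ, hG.trans (max_le_max le_rfl (by norm_num))⟩
  · intro n hn
    have h0 : 1 ≤ n := by
      by_contra h
      have : n = 0 := by omega
      subst this
      simp at hn
      have := abs_nonneg (G 0)
      linarith
    have hφ := (key n h0).1
    have hmax : max (|G 0| - ((n:ℝ) - 1/2)) 0 = 0 := max_eq_right (by linarith)
    rw [hmax] at hφ
    exact abs_eq_zero.mp (le_antisymm hφ (abs_nonneg _))
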